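/- arXiv:1912.12176 — 2 statements merged into one kernel-verified Lean document; each statement's English description precedes it below -/
import Mathlib

section
/- Let n ≥ 1, let A = (a^{ij}) be a symmetric positive-definite n×n real matrix, let b ∈ ℝⁿ, and let H : ℝ → ℝ → ℝ be twice continuously differentiable on an open set U ⊆ (0,∞) × ℝ. For y ∈ ℝⁿ set α(y) = √(yᵀAy), β(y) = bᵀy, Y(y) = Ay, and F(y) = (1/2)H(α(y), β(y)). Then at every y ≠ 0 with (α(y), β(y)) ∈ U, the Hessian of F is given by g^{ij} := ∂²F/∂y_i∂y_j = ρ·a^{ij} + ρ₀·b^i b^j + ρ₋₁·(b^i Y^j + b^j Y^i) + ρ₋₂·Y^i Y^j, where ρ = (1/(2α))H_α, ρ₀ = (1/2)H_ββ, ρ₋₁ = (1/(2α))H_αβ, ρ₋₂ = (1/(2α²))(H_αα − α⁻¹H_α) are evaluated at (α(y), β(y)). -/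
open Matrix

/-- Partial derivative with respect to the first variable (α). -/
noncomputable def dA (H : ℝ → ℝ → ℝ) : ℝ → ℝ → ℝ := fun a b => deriv (fun s => H s b) a

/-- Partial derivative with respect to the second variable (β). -/
noncomputable def dB (H : ℝ → ℝ → ℝ) : ℝ → ℝ → ℝ := fun a b => deriv (fun t => H a t) b

/-- Partial derivative of a function on `ℝⁿ` with respect to the `i`-th coordinate. -/
noncomputable def pder {n : ℕ} (i : Fin n) (F : (Fin n → ℝ) → ℝ) : (Fin n → ℝ) → ℝ :=
  fun y => deriv (fun t => F (Function.update y i t)) (y i)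

section Aux
variable {n : ℕ}

lemma update_eq_add (z : Fin n → ℝ) (i : Fin n) (t : ℝ) :
    Function.update z i t = z + (t - z i) • (Pi.single i 1 : Fin n → ℝ) := by
  funext k
  by_cases h : k = i
  · subst h; simp
  · simp [Function.update_apply, h, Pi.single_apply]

lemma symm_dot (A : Matrix (Fin n) (Fin n) ℝ) (hAsymm : A.IsSymm) (v w : Fin n → ℝ) :
    v ⬝ᵥ A.mulVec w = w ⬝ᵥ A.mulVec v := by
  rw [dotProduct_mulVec, dotProduct_comm, ← Matrix.mulVec_transpose, hAsymm.eq]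

lemma mulVec_update (A : Matrix (Fin n) (Fin n) ℝ) (z : Fin n → ℝ) (i k : Fin n) (t : ℝ) :
    A.mulVec (Function.update z i t) k = A.mulVec z k + (t - z i) * A k i := by
  rw [update_eq_add, Matrix.mulVec_add, Matrix.mulVec_smul]
  simp [Matrix.mulVec_single]

lemma quad_update (A : Matrix (Fin n) (Fin n) ℝ) (hAsymm : A.IsSymm) (z : Fin n → ℝ)
    (i : Fin n) (t : ℝ) :
    (Function.update z i t) ⬝ᵥ A.mulVec (Function.update z i t)
      = z ⬝ᵥ A.mulVec z + 2 * (t - z i) * A.mulVec z i + (t - z i) ^ 2 * A i i := by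
  rw [update_eq_add, Matrix.mulVec_add, Matrix.mulVec_smul]
  simp only [dotProduct_add, add_dotProduct, dotProduct_smul, smul_dotProduct, smul_eq_mul]
  have h1 : Pi.single i (1:ℝ) ⬝ᵥ A.mulVec z = A.mulVec z i := by
    rw [single_dotProduct, one_mul]
  have h2 : z ⬝ᵥ A.mulVec (Pi.single i (1:ℝ)) = A.mulVec z i := by
    rw [symm_dot A hAsymm, h1]
  have h3 : Pi.single i (1:ℝ) ⬝ᵥ A.mulVec (Pi.single i (1:ℝ)) = A i i := by
    rw [single_dotProduct, one_mul, Matrix.mulVec_single]; simp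
  rw [h1, h2, h3]
  ring

lemma bdot_update (b z : Fin n → ℝ) (i : Fin n) (t : ℝ) :
    b ⬝ᵥ Function.update z i t = b ⬝ᵥ z + (t - z i) * b i := by
  rw [update_eq_add, dotProduct_add, dotProduct_smul]
  rw [dotProduct_single, mul_one]
  simp

/-- chain rule for a two-variable function along a curve. -/
lemma hasDerivAt_comp_pair {φ : ℝ × ℝ → ℝ} {p : ℝ × ℝ} (hφ : DifferentiableAt ℝ φ p)
    {f g : ℝ → ℝ} {f' g' t : ℝ} (hf : HasDerivAt f f' t) (hg : HasDerivAt g g' t)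
    (hfg : (f t, g t) = p) :
    HasDerivAt (fun s => φ (f s, g s))
      (f' * fderiv ℝ φ p (1, 0) + g' * fderiv ℝ φ p (0, 1)) t := by
  subst hfg
  have hc : HasDerivAt (fun s => (f s, g s)) (f', g') t := hf.prodMk hg
  have := hφ.hasFDerivAt.comp_hasDerivAt t hc
  refine this.congr_deriv ?_
  have : (f', g') = f' • ((1:ℝ), (0:ℝ)) + g' • ((0:ℝ), (1:ℝ)) := by
    simp [Prod.ext_iff]
  rw [this, map_add, (fderiv ℝ φ (f t, g t)).map_smul, (fderiv ℝ φ (f t, g t)).map_smul]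
  simp [smul_eq_mul]

variable {H : ℝ → ℝ → ℝ} {U : Set (ℝ × ℝ)}

lemma diffAt_of_mem (hUopen : IsOpen U) (hH : ContDiffOn ℝ 2 (Function.uncurry H) U)
    {p : ℝ × ℝ} (hp : p ∈ U) : DifferentiableAt ℝ (Function.uncurry H) p :=
  ((hH p hp).contDiffAt (hUopen.mem_nhds hp)).differentiableAt (by norm_num)

lemma dA_eq_fderiv (hUopen : IsOpen U) (hH : ContDiffOn ℝ 2 (Function.uncurry H) U)
    {p : ℝ × ℝ} (hp : p ∈ U) :
    dA H p.1 p.2 = fderiv ℝ (Function.uncurry H) p (1, 0) := by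
  have hdiff := diffAt_of_mem hUopen hH hp
  have hd := hasDerivAt_comp_pair hdiff (hasDerivAt_id p.1)
      (hasDerivAt_const p.1 p.2) Prod.mk.eta
  have : dA H p.1 p.2 = 1 * fderiv ℝ (Function.uncurry H) p (1, 0)
      + 0 * fderiv ℝ (Function.uncurry H) p (0, 1) := hd.deriv
  rw [this]; ring

lemma dB_eq_fderiv (hUopen : IsOpen U) (hH : ContDiffOn ℝ 2 (Function.uncurry H) U)
    {p : ℝ × ℝ} (hp : p ∈ U) :
    dB H p.1 p.2 = fderiv ℝ (Function.uncurry H) p (0, 1) := by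
  have hdiff := diffAt_of_mem hUopen hH hp
  have hd := hasDerivAt_comp_pair hdiff (hasDerivAt_const p.2 p.1)
      (hasDerivAt_id p.2) Prod.mk.eta
  have : dB H p.1 p.2 = 0 * fderiv ℝ (Function.uncurry H) p (1, 0)
      + 1 * fderiv ℝ (Function.uncurry H) p (0, 1) := hd.deriv
  rw [this]; ring

lemma fderiv_diffAt (hUopen : IsOpen U) (hH : ContDiffOn ℝ 2 (Function.uncurry H) U)
    {p : ℝ × ℝ} (hp : p ∈ U) :
    DifferentiableAt ℝ (fderiv ℝ (Function.uncurry H)) p := by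
  have hC1 : ContDiffOn ℝ 1 (fderiv ℝ (Function.uncurry H)) U :=
    hH.fderiv_of_isOpen hUopen (by norm_num)
  exact ((hC1 p hp).contDiffAt (hUopen.mem_nhds hp)).differentiableAt (by norm_num)

lemma hasFDerivAt_slot (hUopen : IsOpen U) (hH : ContDiffOn ℝ 2 (Function.uncurry H) U)
    {p : ℝ × ℝ} (hp : p ∈ U) (v : ℝ × ℝ) :
    HasFDerivAt (fun q => fderiv ℝ (Function.uncurry H) q v)
      ((ContinuousLinearMap.apply ℝ ℝ v).comp
        (fderiv ℝ (fderiv ℝ (Function.uncurry H)) p)) p :=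
  (ContinuousLinearMap.apply ℝ ℝ v).hasFDerivAt.comp p
    (fderiv_diffAt hUopen hH hp).hasFDerivAt

lemma hasDerivAt_slot_comp (hUopen : IsOpen U) (hH : ContDiffOn ℝ 2 (Function.uncurry H) U)
    {p : ℝ × ℝ} (hp : p ∈ U) (v : ℝ × ℝ) {f g : ℝ → ℝ} {f' g' t : ℝ}
    (hf : HasDerivAt f f' t) (hg : HasDerivAt g g' t) (hfg : (f t, g t) = p) :
    HasDerivAt (fun s => fderiv ℝ (Function.uncurry H) (f s, g s) v)
      (f' * fderiv ℝ (fderiv ℝ (Function.uncurry H)) p (1, 0) v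
        + g' * fderiv ℝ (fderiv ℝ (Function.uncurry H)) p (0, 1) v) t := by
  have h := hasDerivAt_comp_pair (φ := fun q => fderiv ℝ (Function.uncurry H) q v)
    (hasFDerivAt_slot hUopen hH hp v).differentiableAt hf hg hfg
  rw [(hasFDerivAt_slot hUopen hH hp v).fderiv] at h
  simpa using h

lemma ddA_eq (hUopen : IsOpen U) (hH : ContDiffOn ℝ 2 (Function.uncurry H) U)
    {p : ℝ × ℝ} (hp : p ∈ U) :
    dA (dA H) p.1 p.2 = fderiv ℝ (fderiv ℝ (Function.uncurry H)) p (1, 0) (1, 0) := by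
  have hop : IsOpen {s : ℝ | (s, p.2) ∈ U} :=
    hUopen.preimage (continuous_id.prodMk continuous_const)
  have hmem : p.1 ∈ {s : ℝ | (s, p.2) ∈ U} := by simpa using hp
  have hev : (fun s => dA H s p.2) =ᶠ[nhds p.1]
      (fun s => fderiv ℝ (Function.uncurry H) (s, p.2) (1, 0)) := by
    filter_upwards [hop.mem_nhds hmem] with s hs
    exact dA_eq_fderiv hUopen hH hs
  have hd := hasDerivAt_slot_comp hUopen hH hp ((1:ℝ), (0:ℝ))
      (hasDerivAt_id p.1) (hasDerivAt_const p.1 p.2) Prod.mk.eta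
  have : dA (dA H) p.1 p.2 = deriv (fun s => dA H s p.2) p.1 := rfl
  have hd2 := hd.deriv
  simp only [id_eq] at hd2
  rw [this, hev.deriv_eq, hd2]
  ring

lemma dadB_eq (hUopen : IsOpen U) (hH : ContDiffOn ℝ 2 (Function.uncurry H) U)
    {p : ℝ × ℝ} (hp : p ∈ U) :
    dA (dB H) p.1 p.2 = fderiv ℝ (fderiv ℝ (Function.uncurry H)) p (1, 0) (0, 1) := by
  have hop : IsOpen {s : ℝ | (s, p.2) ∈ U} :=
    hUopen.preimage (continuous_id.prodMk continuous_const)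
  have hmem : p.1 ∈ {s : ℝ | (s, p.2) ∈ U} := by simpa using hp
  have hev : (fun s => dB H s p.2) =ᶠ[nhds p.1]
      (fun s => fderiv ℝ (Function.uncurry H) (s, p.2) (0, 1)) := by
    filter_upwards [hop.mem_nhds hmem] with s hs
    exact dB_eq_fderiv hUopen hH hs
  have hd := hasDerivAt_slot_comp hUopen hH hp ((0:ℝ), (1:ℝ))
      (hasDerivAt_id p.1) (hasDerivAt_const p.1 p.2) Prod.mk.eta
  have : dA (dB H) p.1 p.2 = deriv (fun s => dB H s p.2) p.1 := rfl
  have hd2 := hd.deriv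
  simp only [id_eq] at hd2
  rw [this, hev.deriv_eq, hd2]
  ring

lemma dbdB_eq (hUopen : IsOpen U) (hH : ContDiffOn ℝ 2 (Function.uncurry H) U)
    {p : ℝ × ℝ} (hp : p ∈ U) :
    dB (dB H) p.1 p.2 = fderiv ℝ (fderiv ℝ (Function.uncurry H)) p (0, 1) (0, 1) := by
  have hop : IsOpen {s : ℝ | (p.1, s) ∈ U} :=
    hUopen.preimage (continuous_const.prodMk continuous_id)
  have hmem : p.2 ∈ {s : ℝ | (p.1, s) ∈ U} := by simpa using hp
  have hev : (fun s => dB H p.1 s) =ᶠ[nhds p.2]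
      (fun s => fderiv ℝ (Function.uncurry H) (p.1, s) (0, 1)) := by
    filter_upwards [hop.mem_nhds hmem] with s hs
    exact dB_eq_fderiv hUopen hH hs
  have hd := hasDerivAt_slot_comp hUopen hH hp ((0:ℝ), (1:ℝ))
      (hasDerivAt_const p.2 p.1) (hasDerivAt_id p.2) Prod.mk.eta
  have : dB (dB H) p.1 p.2 = deriv (fun s => dB H p.1 s) p.2 := rfl
  have hd2 := hd.deriv
  simp only [id_eq] at hd2
  rw [this, hev.deriv_eq, hd2]
  ring

end Aux

/-- the gradient-type auxiliary function `z ↦ ∂F/∂z_i`. -/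
noncomputable def Gfun {n : ℕ} (A : Matrix (Fin n) (Fin n) ℝ) (b : Fin n → ℝ) (i : Fin n)
    (H : ℝ → ℝ → ℝ) : (Fin n → ℝ) → ℝ :=
  fun z => (1 / 2) *
    (A.mulVec z i / Real.sqrt (z ⬝ᵥ A.mulVec z)
        * fderiv ℝ (Function.uncurry H) (Real.sqrt (z ⬝ᵥ A.mulVec z), b ⬝ᵥ z) (1, 0)
      + b i * fderiv ℝ (Function.uncurry H) (Real.sqrt (z ⬝ᵥ A.mulVec z), b ⬝ᵥ z) (0, 1))

/-- The fundamental tensor of a Cartan space with (α,β)-metric: the Hessian of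
`F = (1/2)H(α, β)` is `g^{ij} = ρ a^{ij} + ρ₀ b^i b^j + ρ₋₁(b^i Y^j + b^j Y^i) + ρ₋₂ Y^i Y^j`. -/
theorem fundamental_tensor_alpha_beta
    (n : ℕ) (hn : 1 ≤ n)
    (A : Matrix (Fin n) (Fin n) ℝ) (hA : A.PosDef) (hAsymm : A.IsSymm)
    (b : Fin n → ℝ)
    (H : ℝ → ℝ → ℝ) (U : Set (ℝ × ℝ)) (hUopen : IsOpen U)
    (hUsub : U ⊆ Set.Ioi (0:ℝ) ×ˢ (Set.univ : Set ℝ))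
    (hH : ContDiffOn ℝ 2 (Function.uncurry H) U)
    (y : Fin n → ℝ) (hy : y ≠ 0)
    (hmem : (Real.sqrt (y ⬝ᵥ A.mulVec y), b ⬝ᵥ y) ∈ U) :
    ∀ i j : Fin n,
      pder j (pder i (fun z => (1 / 2) * H (Real.sqrt (z ⬝ᵥ A.mulVec z)) (b ⬝ᵥ z))) y =
        (1 / (2 * Real.sqrt (y ⬝ᵥ A.mulVec y)))
            * dA H (Real.sqrt (y ⬝ᵥ A.mulVec y)) (b ⬝ᵥ y) * A i j
        + (1 / 2) * dB (dB H) (Real.sqrt (y ⬝ᵥ A.mulVec y)) (b ⬝ᵥ y) * b i * b j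
        + (1 / (2 * Real.sqrt (y ⬝ᵥ A.mulVec y)))
            * dA (dB H) (Real.sqrt (y ⬝ᵥ A.mulVec y)) (b ⬝ᵥ y)
            * (b i * A.mulVec y j + b j * A.mulVec y i)
        + (1 / (2 * Real.sqrt (y ⬝ᵥ A.mulVec y) ^ 2))
            * (dA (dA H) (Real.sqrt (y ⬝ᵥ A.mulVec y)) (b ⬝ᵥ y)
                - (Real.sqrt (y ⬝ᵥ A.mulVec y))⁻¹
                    * dA H (Real.sqrt (y ⬝ᵥ A.mulVec y)) (b ⬝ᵥ y))
            * A.mulVec y i * A.mulVec y j := by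
  intro i j
  -- notation
  set F₂ := Function.uncurry H with hF₂
  -- positivity of the quadratic form at `y`
  have hqy : 0 < y ⬝ᵥ A.mulVec y := by
    have := hA.re_dotProduct_pos hy
    simpa using this
  have hα : 0 < Real.sqrt (y ⬝ᵥ A.mulVec y) := Real.sqrt_pos.2 hqy
  have hαne : Real.sqrt (y ⬝ᵥ A.mulVec y) ≠ 0 := ne_of_gt hα
  -- continuity facts
  have hqc : Continuous (fun z : Fin n → ℝ => z ⬝ᵥ A.mulVec z) := by
    simp only [dotProduct, Matrix.mulVec]
    fun_prop
  have hbc : Continuous (fun z : Fin n → ℝ => b ⬝ᵥ z) := by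
    simp only [dotProduct]
    fun_prop
  -- the good open set
  set V : Set (Fin n → ℝ) := {z | 0 < z ⬝ᵥ A.mulVec z ∧
      (Real.sqrt (z ⬝ᵥ A.mulVec z), b ⬝ᵥ z) ∈ U} with hV
  have hVopen : IsOpen V := by
    apply IsOpen.inter
    · exact isOpen_lt continuous_const hqc
    · exact hUopen.preimage ((Real.continuous_sqrt.comp hqc).prodMk hbc)
  have hyV : y ∈ V := ⟨hqy, hmem⟩
  -- Step A : on V, the first partial derivative is Gfun
  have stepA : ∀ z ∈ V, pder i
      (fun z => (1 / 2) * H (Real.sqrt (z ⬝ᵥ A.mulVec z)) (b ⬝ᵥ z)) z = Gfun A b i H z := by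
    intro z hz
    obtain ⟨hqz, hUz⟩ := hz
    have hαz : (0:ℝ) < Real.sqrt (z ⬝ᵥ A.mulVec z) := Real.sqrt_pos.2 hqz
    -- derivative of the quadratic form along the i-th line
    have hqd : HasDerivAt (fun t => (Function.update z i t) ⬝ᵥ A.mulVec (Function.update z i t))
        (2 * A.mulVec z i) (z i) := by
      have hfun : (fun t => (Function.update z i t) ⬝ᵥ A.mulVec (Function.update z i t))
          = fun t => z ⬝ᵥ A.mulVec z + 2 * (t - z i) * A.mulVec z i + (t - z i) ^ 2 * A i i :=
        funext fun t => quad_update A hAsymm z i t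
      rw [hfun]
      have h1 : HasDerivAt (fun t : ℝ => t - z i) 1 (z i) := (hasDerivAt_id _).sub_const _
      have h2 := (h1.const_mul (2:ℝ)).mul_const (A.mulVec z i)
      have h3 := (h1.pow 2).mul_const (A i i)
      have := ((hasDerivAt_const (z i) (z ⬝ᵥ A.mulVec z)).add h2).add h3
      refine this.congr_deriv ?_
      simp
    have hβd : HasDerivAt (fun t => b ⬝ᵥ Function.update z i t) (b i) (z i) := by
      have hfun : (fun t => b ⬝ᵥ Function.update z i t)
          = fun t => b ⬝ᵥ z + (t - z i) * b i := funext fun t => bdot_update b z i t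
      rw [hfun]
      have h1 : HasDerivAt (fun t : ℝ => t - z i) 1 (z i) := (hasDerivAt_id _).sub_const _
      have := (hasDerivAt_const (z i) (b ⬝ᵥ z)).add (h1.mul_const (b i))
      refine this.congr_deriv ?_
      ring
    have hq0 : Function.update z i (z i) = z := Function.update_eq_self i z
    have hαd : HasDerivAt
        (fun t => Real.sqrt ((Function.update z i t) ⬝ᵥ A.mulVec (Function.update z i t)))
        (A.mulVec z i / Real.sqrt (z ⬝ᵥ A.mulVec z)) (z i) := by
      have hpt : (Function.update z i (z i)) ⬝ᵥ A.mulVec (Function.update z i (z i))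
          = z ⬝ᵥ A.mulVec z := by rw [hq0]
      have hs : HasDerivAt Real.sqrt (1 / (2 * Real.sqrt (z ⬝ᵥ A.mulVec z)))
          ((Function.update z i (z i)) ⬝ᵥ A.mulVec (Function.update z i (z i))) := by
        rw [hpt]; exact Real.hasDerivAt_sqrt (ne_of_gt hqz)
      have hcomp := hs.comp (z i) hqd
      have : (fun t => Real.sqrt ((Function.update z i t) ⬝ᵥ A.mulVec (Function.update z i t)))
          = (Real.sqrt ∘ fun t => (Function.update z i t) ⬝ᵥ A.mulVec (Function.update z i t)) :=
        rfl
      rw [this]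
      refine hcomp.congr_deriv ?_
      field_simp
    have hpair : ((fun t => Real.sqrt ((Function.update z i t) ⬝ᵥ A.mulVec (Function.update z i t))) (z i),
        (fun t => b ⬝ᵥ Function.update z i t) (z i))
        = (Real.sqrt (z ⬝ᵥ A.mulVec z), b ⬝ᵥ z) := by
      simp [hq0]
    have hHd := hasDerivAt_comp_pair (diffAt_of_mem hUopen hH hUz) hαd hβd hpair
    have hFd := hHd.const_mul (1/2 : ℝ)
    have : pder i (fun z => (1 / 2) * H (Real.sqrt (z ⬝ᵥ A.mulVec z)) (b ⬝ᵥ z)) z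
        = deriv (fun t => (1 / 2) *
            H (Real.sqrt ((Function.update z i t) ⬝ᵥ A.mulVec (Function.update z i t)))
              (b ⬝ᵥ Function.update z i t)) (z i) := rfl
    rw [this]
    have hder := hFd.deriv
    rw [show (fun t => (1 / 2) *
            H (Real.sqrt ((Function.update z i t) ⬝ᵥ A.mulVec (Function.update z i t)))
              (b ⬝ᵥ Function.update z i t))
        = fun t => (1/2 : ℝ) * Function.uncurry H
            (Real.sqrt ((Function.update z i t) ⬝ᵥ A.mulVec (Function.update z i t)),
              b ⬝ᵥ Function.update z i t) from rfl]
    rw [hder, Gfun]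
  -- Step B : the second partial derivative only depends on Gfun near y
  have hcont_update : Continuous (fun t => Function.update y j t) := by
    apply continuous_pi
    intro k
    by_cases h : k = j
    · subst h; simp only [Function.update_apply, if_pos rfl]; exact continuous_id
    · simp only [Function.update_apply, if_neg h]; exact continuous_const
  have hupd_self : Function.update y j (y j) = y := Function.update_eq_self j y
  have stepB : pder j (pder i (fun z => (1 / 2) * H (Real.sqrt (z ⬝ᵥ A.mulVec z)) (b ⬝ᵥ z))) y
      = deriv (fun t => Gfun A b i H (Function.update y j t)) (y j) := by
    have hmemV : ∀ᶠ t in nhds (y j), Function.update y j t ∈ V := by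
      have : (fun t => Function.update y j t) ⁻¹' V ∈ nhds (y j) := by
        apply hcont_update.continuousAt.preimage_mem_nhds
        rw [hupd_self]
        exact hVopen.mem_nhds hyV
      exact this
    have hev : (fun t => pder i
          (fun z => (1 / 2) * H (Real.sqrt (z ⬝ᵥ A.mulVec z)) (b ⬝ᵥ z)) (Function.update y j t))
        =ᶠ[nhds (y j)] (fun t => Gfun A b i H (Function.update y j t)) := by
      filter_upwards [hmemV] with t ht
      exact stepA _ ht
    exact hev.deriv_eq
  rw [stepB]
  -- Step C : differentiate Gfun along the j-th line
  -- derivative building blocks at t = y j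
  have hqd : HasDerivAt (fun t => (Function.update y j t) ⬝ᵥ A.mulVec (Function.update y j t))
      (2 * A.mulVec y j) (y j) := by
    have hfun : (fun t => (Function.update y j t) ⬝ᵥ A.mulVec (Function.update y j t))
        = fun t => y ⬝ᵥ A.mulVec y + 2 * (t - y j) * A.mulVec y j + (t - y j) ^ 2 * A j j :=
      funext fun t => quad_update A hAsymm y j t
    rw [hfun]
    have h1 : HasDerivAt (fun t : ℝ => t - y j) 1 (y j) := (hasDerivAt_id _).sub_const _
    have h2 := (h1.const_mul (2:ℝ)).mul_const (A.mulVec y j)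
    have h3 := (h1.pow 2).mul_const (A j j)
    have := ((hasDerivAt_const (y j) (y ⬝ᵥ A.mulVec y)).add h2).add h3
    refine this.congr_deriv ?_
    simp
  have hβd : HasDerivAt (fun t => b ⬝ᵥ Function.update y j t) (b j) (y j) := by
    have hfun : (fun t => b ⬝ᵥ Function.update y j t)
        = fun t => b ⬝ᵥ y + (t - y j) * b j := funext fun t => bdot_update b y j t
    rw [hfun]
    have h1 : HasDerivAt (fun t : ℝ => t - y j) 1 (y j) := (hasDerivAt_id _).sub_const _
    have := (hasDerivAt_const (y j) (b ⬝ᵥ y)).add (h1.mul_const (b j))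
    refine this.congr_deriv ?_
    ring
  have hαd : HasDerivAt
      (fun t => Real.sqrt ((Function.update y j t) ⬝ᵥ A.mulVec (Function.update y j t)))
      (A.mulVec y j / Real.sqrt (y ⬝ᵥ A.mulVec y)) (y j) := by
    have hpt : (Function.update y j (y j)) ⬝ᵥ A.mulVec (Function.update y j (y j))
        = y ⬝ᵥ A.mulVec y := by rw [hupd_self]
    have hs : HasDerivAt Real.sqrt (1 / (2 * Real.sqrt (y ⬝ᵥ A.mulVec y)))
        ((Function.update y j (y j)) ⬝ᵥ A.mulVec (Function.update y j (y j))) := by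
      rw [hpt]; exact Real.hasDerivAt_sqrt (ne_of_gt hqy)
    have hcomp := hs.comp (y j) hqd
    have : (fun t => Real.sqrt ((Function.update y j t) ⬝ᵥ A.mulVec (Function.update y j t)))
        = (Real.sqrt ∘ fun t => (Function.update y j t) ⬝ᵥ A.mulVec (Function.update y j t)) :=
      rfl
    rw [this]
    refine hcomp.congr_deriv ?_
    field_simp
  have hnum : HasDerivAt (fun t => A.mulVec (Function.update y j t) i) (A i j) (y j) := by
    have hfun : (fun t => A.mulVec (Function.update y j t) i)
        = fun t => A.mulVec y i + (t - y j) * A i j := funext fun t => mulVec_update A y j i t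
    rw [hfun]
    have h1 : HasDerivAt (fun t : ℝ => t - y j) 1 (y j) := (hasDerivAt_id _).sub_const _
    have := (hasDerivAt_const (y j) (A.mulVec y i)).add (h1.mul_const (A i j))
    refine this.congr_deriv ?_
    ring
  have hpair : ((fun t => Real.sqrt ((Function.update y j t) ⬝ᵥ A.mulVec (Function.update y j t))) (y j),
      (fun t => b ⬝ᵥ Function.update y j t) (y j))
      = (Real.sqrt (y ⬝ᵥ A.mulVec y), b ⬝ᵥ y) := by
    simp [hupd_self]
  have hα0 : (fun t => Real.sqrt ((Function.update y j t) ⬝ᵥ A.mulVec (Function.update y j t))) (y j)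
      = Real.sqrt (y ⬝ᵥ A.mulVec y) := by simp [hupd_self]
  have hHA := hasDerivAt_slot_comp hUopen hH hmem ((1:ℝ), (0:ℝ)) hαd hβd hpair
  have hHB := hasDerivAt_slot_comp hUopen hH hmem ((0:ℝ), (1:ℝ)) hαd hβd hpair
  -- derivative of the quotient f1 / α
  have hdiv := hnum.div hαd (by rw [hupd_self]; exact hαne)
  have htotal := (((hdiv.mul hHA).add ((hasDerivAt_const (y j) (b i)).mul hHB)).const_mul
      (1/2 : ℝ))
  have hG : deriv (fun t => Gfun A b i H (Function.update y j t)) (y j) = _ := htotal.deriv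
  rw [hG]
  -- now pure algebra
  set α := Real.sqrt (y ⬝ᵥ A.mulVec y) with hαdef
  set β := b ⬝ᵥ y with hβdef
  have hsym : fderiv ℝ (fderiv ℝ F₂) (α, β) (0, 1) (1, 0)
      = fderiv ℝ (fderiv ℝ F₂) (α, β) (1, 0) (0, 1) :=
    (((hH (α, β) hmem).contDiffAt (hUopen.mem_nhds hmem)).isSymmSndFDerivAt (by simp)) _ _
  rw [dA_eq_fderiv hUopen hH hmem, dadB_eq hUopen hH hmem, dbdB_eq hUopen hH hmem,
    ddA_eq hUopen hH hmem]
  simp only [Pi.div_apply, hα0, hupd_self]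
  rw [hsym]
  simp only [← hF₂, ← hαdef, ← hβdef]
  field_simp
  ring
end

section
/- Let n ≥ 1, let A = (a^{ij}) be a symmetric positive-definite n×n real matrix, let b ∈ ℝⁿ, and let H : ℝ → ℝ → ℝ be three times continuously differentiable on an open set U ⊆ (0,∞) × ℝ. For y ∈ ℝⁿ set α(y) = √(yᵀAy), β(y) = bᵀy, Y(y) = Ay, and F(y) = (1/2)H(α(y), β(y)). Then at every y ≠ 0 with (α(y), β(y)) ∈ U, the third partial derivatives of F satisfy ∂³F/∂y_i∂y_j∂y_k = r₋₁·b^i b^j b^k + Σ_{cyc(i,j,k)} [ ρ₋₁·a^{ij} b^k + ρ₋₂·a^{ij} Y^k + r₋₂·b^i b^j Y^k + r₋₃·b^i Y^j Y^k ] + r₋₄·Y^i Y^j Y^k, where Σ_{cyc(i,j,k)} denotes the sum over the three cyclic permutations of (i,j,k), and the invariants ρ₋₁ = (1/(2α))H_αβ, ρ₋₂ = (1/(2α²))(H_αα − α⁻¹H_α), r₋₁ = (1/2)H_βββ, r₋₂ = (1/(2α))H_αββ, r₋₃ = (1/(2α²))(H_ααβ − α⁻¹H_αβ), r₋₄ =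 (1/(2α³))(H_ααα − 3α⁻¹H_αα + 3α⁻²H_α) are evaluated at (α(y), β(y)). Equivalently, the Cartan tensor C^{ijk} = −(1/2)∂³F/∂y_i∂y_j∂y_k of the Cartan space with (α,β)-metric H equals −(1/2) times this expression. -/
open Matrix

open Function

lemma upd_eq {n : ℕ} (z : Fin n → ℝ) (j : Fin n) (t : ℝ) :
    Function.update z j t = z + (t - z j) • (Pi.single j (1:ℝ) : Fin n → ℝ) := by
  funext i
  rcases eq_or_ne i j with h | h
  · subst h; simp
  · simp [Function.update_apply, h, Pi.single_apply]

lemma dot_col {n : ℕ} {A : Matrix (Fin n) (Fin n) ℝ} (hAs : A.IsSymm) (z : Fin n → ℝ)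
    (j : Fin n) : (z ⬝ᵥ fun i => A i j) = (A *ᵥ z) j := by
  simp only [dotProduct, Matrix.mulVec]
  exact Finset.sum_congr rfl fun i _ => by rw [mul_comm, hAs.apply i j]

lemma quad_upd {n : ℕ} {A : Matrix (Fin n) (Fin n) ℝ} (hAs : A.IsSymm) (z : Fin n → ℝ)
    (j : Fin n) (t : ℝ) :
    Function.update z j t ⬝ᵥ A *ᵥ Function.update z j t
      = z ⬝ᵥ A *ᵥ z + (t - z j) * (2 * (A *ᵥ z) j) + (t - z j) ^ 2 * A j j := by
  rw [upd_eq]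
  simp only [Matrix.mulVec_add, Matrix.mulVec_smul, dotProduct_add, add_dotProduct,
    smul_dotProduct, dotProduct_smul, smul_eq_mul, single_dotProduct, one_mul,
    Matrix.mulVec_single, mul_one, Pi.single_eq_same, dot_col hAs z j]
  simp only [MulOpposite.op_one, one_smul, Matrix.col_apply]
  rw [show z ⬝ᵥ A.col j = (A *ᵥ z) j from dot_col hAs z j]
  ring

lemma hasDerivAt_quad {n : ℕ} {A : Matrix (Fin n) (Fin n) ℝ} (hAs : A.IsSymm) (z : Fin n → ℝ)
    (j : Fin n) :
    HasDerivAt (fun t => Function.update z j t ⬝ᵥ A *ᵥ Function.update z j t)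
      (2 * (A *ᵥ z) j) (z j) := by
  have h : (fun t => Function.update z j t ⬝ᵥ A *ᵥ Function.update z j t)
      = fun t => z ⬝ᵥ A *ᵥ z + (t - z j) * (2 * (A *ᵥ z) j) + (t - z j) ^ 2 * A j j := by
    funext t; exact quad_upd hAs z j t
  rw [h]
  have h1 : HasDerivAt (fun t : ℝ => t - z j) 1 (z j) := (hasDerivAt_id (z j)).sub_const (z j)
  have := ((h1.mul_const (2 * (A *ᵥ z) j)).const_add (z ⬝ᵥ A *ᵥ z)).add
    ((h1.pow 2).mul_const (A j j))
  simp at this; exact this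

lemma hasDerivAt_al {n : ℕ} {A : Matrix (Fin n) (Fin n) ℝ} (hAs : A.IsSymm) {z : Fin n → ℝ}
    (hz : 0 < z ⬝ᵥ A *ᵥ z) (j : Fin n) :
    HasDerivAt (fun t => Real.sqrt (Function.update z j t ⬝ᵥ A *ᵥ Function.update z j t))
      ((A *ᵥ z) j / Real.sqrt (z ⬝ᵥ A *ᵥ z)) (z j) := by
  have hs : HasDerivAt Real.sqrt (1 / (2 * Real.sqrt (z ⬝ᵥ A *ᵥ z)))
      ((fun t => Function.update z j t ⬝ᵥ A *ᵥ Function.update z j t) (z j)) := by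
    simp only [Function.update_eq_self]
    exact Real.hasDerivAt_sqrt hz.ne'
  have hcomp := hs.comp (z j) (hasDerivAt_quad hAs z j)
  have hsp : Real.sqrt (z ⬝ᵥ A *ᵥ z) ≠ 0 := (Real.sqrt_pos.2 hz).ne'
  have hval : 1 / (2 * Real.sqrt (z ⬝ᵥ A *ᵥ z)) * (2 * (A *ᵥ z) j)
      = (A *ᵥ z) j / Real.sqrt (z ⬝ᵥ A *ᵥ z) := by
    field_simp
  rw [hval] at hcomp
  exact hcomp

lemma dot_upd {n : ℕ} (b z : Fin n → ℝ) (j : Fin n) (t : ℝ) :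
    b ⬝ᵥ Function.update z j t = b ⬝ᵥ z + (t - z j) * b j := by
  rw [upd_eq]
  simp [dotProduct_add, dotProduct_smul, dotProduct_single, mul_comm]

lemma mulVec_upd {n : ℕ} (A : Matrix (Fin n) (Fin n) ℝ) (z : Fin n → ℝ) (j : Fin n) (t : ℝ)
    (i : Fin n) :
    (A *ᵥ Function.update z j t) i = (A *ᵥ z) i + (t - z j) * A i j := by
  rw [upd_eq]
  simp [Matrix.mulVec_add, Matrix.mulVec_smul, mul_comm]

lemma hasDerivAt_be {n : ℕ} (b z : Fin n → ℝ) (j : Fin n) :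
    HasDerivAt (fun t => b ⬝ᵥ Function.update z j t) (b j) (z j) := by
  have h : (fun t => b ⬝ᵥ Function.update z j t) = fun t => b ⬝ᵥ z + (t - z j) * b j := by
    funext t; exact dot_upd b z j t
  rw [h]
  simpa using (((hasDerivAt_id (z j)).sub_const (z j)).mul_const (b j)).const_add (b ⬝ᵥ z)

lemma hasDerivAt_Y {n : ℕ} (A : Matrix (Fin n) (Fin n) ℝ) (z : Fin n → ℝ) (j i : Fin n) :
    HasDerivAt (fun t => (A *ᵥ Function.update z j t) i) (A i j) (z j) := by
  have h : (fun t => (A *ᵥ Function.update z j t) i)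
      = fun t => (A *ᵥ z) i + (t - z j) * A i j := by
    funext t; exact mulVec_upd A z j t i
  rw [h]
  simpa using (((hasDerivAt_id (z j)).sub_const (z j)).mul_const (A i j)).const_add ((A *ᵥ z) i)

lemma dA_eq_fderiv_s11 {g : ℝ → ℝ → ℝ} {p : ℝ × ℝ}
    (hg : DifferentiableAt ℝ (Function.uncurry g) p) :
    dA g p.1 p.2 = fderiv ℝ (Function.uncurry g) p (1, 0) := by
  have h1 : HasDerivAt (fun s : ℝ => (s, p.2)) ((1:ℝ), (0:ℝ)) p.1 :=
    (hasDerivAt_id p.1).prodMk (hasDerivAt_const p.1 p.2)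
  have h2 : HasDerivAt (fun s => g s p.2) (fderiv ℝ (Function.uncurry g) p (1, 0)) p.1 :=
    HasFDerivAt.comp_hasDerivAt (l := Function.uncurry g) p.1 hg.hasFDerivAt h1
  exact h2.deriv

lemma dB_eq_fderiv_s11 {g : ℝ → ℝ → ℝ} {p : ℝ × ℝ}
    (hg : DifferentiableAt ℝ (Function.uncurry g) p) :
    dB g p.1 p.2 = fderiv ℝ (Function.uncurry g) p (0, 1) := by
  have h1 : HasDerivAt (fun t : ℝ => (p.1, t)) ((0:ℝ), (1:ℝ)) p.2 :=
    (hasDerivAt_const p.2 p.1).prodMk (hasDerivAt_id p.2)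
  have h2 : HasDerivAt (fun t => g p.1 t) (fderiv ℝ (Function.uncurry g) p (0, 1)) p.2 :=
    HasFDerivAt.comp_hasDerivAt (l := Function.uncurry g) p.2 hg.hasFDerivAt h1
  exact h2.deriv

/-- chain rule for `g (α(z), β(z))` along coordinate `j`. -/
lemma hasDerivAt_comp_g {n : ℕ} {A : Matrix (Fin n) (Fin n) ℝ} (hAs : A.IsSymm)
    (b : Fin n → ℝ) {z : Fin n → ℝ} (hz : 0 < z ⬝ᵥ A *ᵥ z) (j : Fin n)
    {g : ℝ → ℝ → ℝ}
    (hg : DifferentiableAt ℝ (Function.uncurry g) (Real.sqrt (z ⬝ᵥ A *ᵥ z), b ⬝ᵥ z)) :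
    HasDerivAt
      (fun t => g (Real.sqrt (Function.update z j t ⬝ᵥ A *ᵥ Function.update z j t))
        (b ⬝ᵥ Function.update z j t))
      (dA g (Real.sqrt (z ⬝ᵥ A *ᵥ z)) (b ⬝ᵥ z) * ((A *ᵥ z) j / Real.sqrt (z ⬝ᵥ A *ᵥ z))
        + dB g (Real.sqrt (z ⬝ᵥ A *ᵥ z)) (b ⬝ᵥ z) * b j) (z j) := by
  set p : ℝ × ℝ := (Real.sqrt (z ⬝ᵥ A *ᵥ z), b ⬝ᵥ z) with hp
  have hpair : HasDerivAt
      (fun t => (Real.sqrt (Function.update z j t ⬝ᵥ A *ᵥ Function.update z j t),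
        b ⬝ᵥ Function.update z j t))
      ((A *ᵥ z) j / Real.sqrt (z ⬝ᵥ A *ᵥ z), b j) (z j) :=
    (hasDerivAt_al hAs hz j).prodMk (hasDerivAt_be b z j)
  have hpt : (fun t => (Real.sqrt (Function.update z j t ⬝ᵥ A *ᵥ Function.update z j t),
      b ⬝ᵥ Function.update z j t)) (z j) = p := by
    simp [Function.update_eq_self, hp]
  have hgf : HasFDerivAt (Function.uncurry g) (fderiv ℝ (Function.uncurry g) p)
      ((fun t => (Real.sqrt (Function.update z j t ⬝ᵥ A *ᵥ Function.update z j t),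
      b ⬝ᵥ Function.update z j t)) (z j)) := by rw [hpt]; exact hg.hasFDerivAt
  have hcomp := hgf.comp_hasDerivAt (z j) hpair
  have hv : ((A *ᵥ z) j / Real.sqrt (z ⬝ᵥ A *ᵥ z), b j)
      = ((A *ᵥ z) j / Real.sqrt (z ⬝ᵥ A *ᵥ z)) • ((1:ℝ), (0:ℝ)) + (b j) • ((0:ℝ), (1:ℝ)) := by
    simp [Prod.ext_iff]
  have hval : fderiv ℝ (Function.uncurry g) p ((A *ᵥ z) j / Real.sqrt (z ⬝ᵥ A *ᵥ z), b j)
      = dA g p.1 p.2 * ((A *ᵥ z) j / Real.sqrt (z ⬝ᵥ A *ᵥ z)) + dB g p.1 p.2 * b j := by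
    rw [hv, map_add, _root_.map_smul, _root_.map_smul, dA_eq_fderiv_s11 hg, dB_eq_fderiv_s11 hg]
    simp [mul_comm]
  rw [hval] at hcomp
  exact hcomp

lemma contDiffOn_fderiv_apply {f : ℝ × ℝ → ℝ} {U : Set (ℝ × ℝ)} (hU : IsOpen U) {m : ℕ}
    (hf : ContDiffOn ℝ (m + 1) f U) (v : ℝ × ℝ) :
    ContDiffOn ℝ m (fun p => fderiv ℝ f p v) U := by
  have h : ContDiffOn ℝ m (fderiv ℝ f) U := by
    have h2 : ContDiffOn ℝ ((m : WithTop ℕ∞) + 1) f U := by exact_mod_cast hf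
    exact ((contDiffOn_succ_iff_fderiv_of_isOpen hU).1 h2).2.2
  exact (ContinuousLinearMap.apply ℝ ℝ v).contDiff.comp_contDiffOn h

lemma contDiffOn_dA {H : ℝ → ℝ → ℝ} {U : Set (ℝ × ℝ)} (hU : IsOpen U) {m : ℕ}
    (hH : ContDiffOn ℝ (m + 1) (Function.uncurry H) U) :
    ContDiffOn ℝ m (Function.uncurry (dA H)) U := by
  refine (contDiffOn_fderiv_apply hU hH (1, 0)).congr fun p hp => ?_
  exact dA_eq_fderiv_s11 ((hH.differentiableOn (by exact_mod_cast Nat.succ_ne_zero m)).differentiableAt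
    (hU.mem_nhds hp))

lemma contDiffOn_dB {H : ℝ → ℝ → ℝ} {U : Set (ℝ × ℝ)} (hU : IsOpen U) {m : ℕ}
    (hH : ContDiffOn ℝ (m + 1) (Function.uncurry H) U) :
    ContDiffOn ℝ m (Function.uncurry (dB H)) U := by
  refine (contDiffOn_fderiv_apply hU hH (0, 1)).congr fun p hp => ?_
  exact dB_eq_fderiv_s11 ((hH.differentiableOn (by exact_mod_cast Nat.succ_ne_zero m)).differentiableAt
    (hU.mem_nhds hp))

lemma dBdA_eq_dAdB {g : ℝ → ℝ → ℝ} {U : Set (ℝ × ℝ)} (hU : IsOpen U)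
    (hg : ContDiffOn ℝ 2 (Function.uncurry g) U) {p : ℝ × ℝ} (hp : p ∈ U) :
    dB (dA g) p.1 p.2 = dA (dB g) p.1 p.2 := by
  set f := Function.uncurry g with hf
  have hdiffU : ∀ q ∈ U, DifferentiableAt ℝ f q := fun q hq =>
    (hg.differentiableOn (by norm_num)).differentiableAt (hU.mem_nhds hq)
  have hf' : ContDiffOn ℝ 1 (fderiv ℝ f) U := by
    have h2 : ContDiffOn ℝ ((1 : WithTop ℕ∞) + 1) f U := by exact_mod_cast hg
    exact ((contDiffOn_succ_iff_fderiv_of_isOpen hU).1 h2).2.2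
  have hf'' : DifferentiableAt ℝ (fderiv ℝ f) p :=
    (hf'.differentiableOn one_ne_zero).differentiableAt (hU.mem_nhds hp)
  have hev : ∀ᶠ q in nhds p, HasFDerivAt f (fderiv ℝ f q) q := by
    filter_upwards [hU.mem_nhds hp] with q hq using (hdiffU q hq).hasFDerivAt
  have hsymm := second_derivative_symmetric_of_eventually hev hf''.hasFDerivAt
    ((0:ℝ), (1:ℝ)) ((1:ℝ), (0:ℝ))
  have e1 : dB (dA g) p.1 p.2 = fderiv ℝ (fderiv ℝ f) p (0, 1) (1, 0) := by
    have h1 : HasDerivAt (fun t : ℝ => (p.1, t)) ((0:ℝ), (1:ℝ)) p.2 :=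
      (hasDerivAt_const p.2 p.1).prodMk (hasDerivAt_id p.2)
    have h2 : HasDerivAt (fun t => fderiv ℝ f (p.1, t))
        (fderiv ℝ (fderiv ℝ f) p (0, 1)) p.2 :=
      hf''.hasFDerivAt.comp_hasDerivAt p.2 h1
    have h3 : HasDerivAt (fun t => fderiv ℝ f (p.1, t) (1, 0))
        (fderiv ℝ (fderiv ℝ f) p (0, 1) (1, 0)) p.2 :=
      (ContinuousLinearMap.apply ℝ ℝ ((1:ℝ), (0:ℝ))).hasFDerivAt.comp_hasDerivAt p.2 h2
    have hopen : IsOpen {t : ℝ | (p.1, t) ∈ U} :=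
      hU.preimage (Continuous.prodMk_right p.1)
    have heq : (fun t => dA g p.1 t) =ᶠ[nhds p.2] (fun t => fderiv ℝ f (p.1, t) (1, 0)) := by
      filter_upwards [hopen.mem_nhds hp] with t ht
      exact dA_eq_fderiv_s11 (hdiffU _ ht)
    show deriv (fun t => dA g p.1 t) p.2 = _
    rw [heq.deriv_eq, h3.deriv]
  have e2 : dA (dB g) p.1 p.2 = fderiv ℝ (fderiv ℝ f) p (1, 0) (0, 1) := by
    have h1 : HasDerivAt (fun s : ℝ => (s, p.2)) ((1:ℝ), (0:ℝ)) p.1 :=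
      (hasDerivAt_id p.1).prodMk (hasDerivAt_const p.1 p.2)
    have h2 : HasDerivAt (fun s => fderiv ℝ f (s, p.2))
        (fderiv ℝ (fderiv ℝ f) p (1, 0)) p.1 :=
      hf''.hasFDerivAt.comp_hasDerivAt p.1 h1
    have h3 : HasDerivAt (fun s => fderiv ℝ f (s, p.2) (0, 1))
        (fderiv ℝ (fderiv ℝ f) p (1, 0) (0, 1)) p.1 :=
      (ContinuousLinearMap.apply ℝ ℝ ((0:ℝ), (1:ℝ))).hasFDerivAt.comp_hasDerivAt p.1 h2
    have hopen : IsOpen {s : ℝ | (s, p.2) ∈ U} :=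
      hU.preimage (continuous_id.prodMk continuous_const)
    have heq : (fun s => dB g s p.2) =ᶠ[nhds p.1] (fun s => fderiv ℝ f (s, p.2) (0, 1)) := by
      filter_upwards [hopen.mem_nhds hp] with s hs
      exact dB_eq_fderiv_s11 (hdiffU _ hs)
    show deriv (fun s => dB g s p.2) p.1 = _
    rw [heq.deriv_eq, h3.deriv]
  rw [e1, e2, hsymm]

lemma dA_congr {g g' : ℝ → ℝ → ℝ} {U : Set (ℝ × ℝ)} (hU : IsOpen U)
    (h : ∀ q ∈ U, g q.1 q.2 = g' q.1 q.2) {p : ℝ × ℝ} (hp : p ∈ U) :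
    dA g p.1 p.2 = dA g' p.1 p.2 := by
  have hopen : IsOpen {s : ℝ | (s, p.2) ∈ U} :=
    hU.preimage (continuous_id.prodMk continuous_const)
  have heq : (fun s => g s p.2) =ᶠ[nhds p.1] (fun s => g' s p.2) := by
    filter_upwards [hopen.mem_nhds hp] with s hs
    exact h (s, p.2) hs
  exact heq.deriv_eq

set_option maxHeartbeats 2000000 in
/-- The third derivatives of `F = (1/2)H(α,β)`, equivalently the Cartan tensor
`C^{ijk} = -(1/2) ∂³F/∂y_i∂y_j∂y_k` of a Cartan space with (α,β)-metric. -/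
theorem cartan_tensor_alpha_beta
    (n : ℕ) (hn : 1 ≤ n)
    (A : Matrix (Fin n) (Fin n) ℝ) (hA : A.PosDef) (hAsymm : A.IsSymm)
    (b : Fin n → ℝ)
    (H : ℝ → ℝ → ℝ) (U : Set (ℝ × ℝ)) (hUopen : IsOpen U)
    (hUsub : U ⊆ Set.Ioi (0:ℝ) ×ˢ (Set.univ : Set ℝ))
    (hH : ContDiffOn ℝ 3 (Function.uncurry H) U)
    (y : Fin n → ℝ) (hy : y ≠ 0)
    (hmem : (Real.sqrt (y ⬝ᵥ A.mulVec y), b ⬝ᵥ y) ∈ U) :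
    ∀ i j k : Fin n,
      let al := Real.sqrt (y ⬝ᵥ A.mulVec y)
      let be := b ⬝ᵥ y
      let Y := A.mulVec y
      let rhom1 := (1 / (2 * al)) * dA (dB H) al be
      let rhom2 := (1 / (2 * al ^ 2)) * (dA (dA H) al be - al⁻¹ * dA H al be)
      let rm1 := (1 / 2) * dB (dB (dB H)) al be
      let rm2 := (1 / (2 * al)) * dA (dB (dB H)) al be
      let rm3 := (1 / (2 * al ^ 2)) * (dA (dA (dB H)) al be - al⁻¹ * dA (dB H) al be)
      let rm4 := (1 / (2 * al ^ 3)) *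
        (dA (dA (dA H)) al be - 3 * al⁻¹ * dA (dA H) al be + 3 * al⁻¹ ^ 2 * dA H al be)
      pder k (pder j (pder i
            (fun z => (1 / 2) * H (Real.sqrt (z ⬝ᵥ A.mulVec z)) (b ⬝ᵥ z)))) y =
          rm1 * b i * b j * b k
            + (rhom1 * A i j * b k + rhom2 * A i j * Y k
                + rm2 * b i * b j * Y k + rm3 * b i * Y j * Y k)
            + (rhom1 * A j k * b i + rhom2 * A j k * Y i
                + rm2 * b j * b k * Y i + rm3 * b j * Y k * Y i)
            + (rhom1 * A k i * b j + rhom2 * A k i * Y j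
                + rm2 * b k * b i * Y j + rm3 * b k * Y i * Y j)
            + rm4 * Y i * Y j * Y k ∧
      -(1 / 2) * pder k (pder j (pder i
            (fun z => (1 / 2) * H (Real.sqrt (z ⬝ᵥ A.mulVec z)) (b ⬝ᵥ z)))) y =
          -(1 / 2) * (rm1 * b i * b j * b k
            + (rhom1 * A i j * b k + rhom2 * A i j * Y k
                + rm2 * b i * b j * Y k + rm3 * b i * Y j * Y k)
            + (rhom1 * A j k * b i + rhom2 * A j k * Y i
                + rm2 * b j * b k * Y i + rm3 * b j * Y k * Y i)
            + (rhom1 * A k i * b j + rhom2 * A k i * Y j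
                + rm2 * b k * b i * Y j + rm3 * b k * Y i * Y j)
            + rm4 * Y i * Y j * Y k) := by
  classical
  intro i j k
  -- open set V where everything is nice
  set V : Set (Fin n → ℝ) :=
    (fun z : Fin n → ℝ => (Real.sqrt (z ⬝ᵥ A *ᵥ z), b ⬝ᵥ z)) ⁻¹' U with hVdef
  have hcont : Continuous fun z : Fin n → ℝ => (Real.sqrt (z ⬝ᵥ A *ᵥ z), b ⬝ᵥ z) := by
    have h1 : Continuous fun z : Fin n → ℝ => z ⬝ᵥ A *ᵥ z := by
      have he : (fun z : Fin n → ℝ => z ⬝ᵥ A *ᵥ z)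
          = fun z => ∑ i1, z i1 * ∑ l, A i1 l * z l := by
        funext z; simp [dotProduct, Matrix.mulVec]
      rw [he]
      exact continuous_finset_sum _ fun i1 _ => (continuous_apply i1).mul
        (continuous_finset_sum _ fun l _ => continuous_const.mul (continuous_apply l))
    have h2 : Continuous fun z : Fin n → ℝ => b ⬝ᵥ z := by
      have he : (fun z : Fin n → ℝ => b ⬝ᵥ z) = fun z => ∑ i1, b i1 * z i1 := by
        funext z; simp [dotProduct]
      rw [he]
      exact continuous_finset_sum _ fun i1 _ => continuous_const.mul (continuous_apply i1)
    exact (Real.continuous_sqrt.comp h1).prodMk h2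
  have hVopen : IsOpen V := hUopen.preimage hcont
  have hyV : y ∈ V := hmem
  have hposV : ∀ z ∈ V, 0 < z ⬝ᵥ A *ᵥ z := by
    intro z hz
    have h := hUsub hz
    exact Real.sqrt_pos.1 h.1
  have hupd_mem : ∀ z ∈ V, ∀ j1 : Fin n, ∀ᶠ t in nhds (z j1), Function.update z j1 t ∈ V := by
    intro z hz j1
    have hcu : Continuous fun t : ℝ => Function.update z j1 t := by
      apply continuous_pi; intro i1
      rcases eq_or_ne i1 j1 with h | h
      · subst h
        simp only [Function.update_apply, if_pos rfl]
        exact continuous_id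
      · simp only [Function.update_apply, if_neg h]
        exact continuous_const
    have h0 : V ∈ nhds (Function.update z j1 (z j1)) := by
      rw [Function.update_eq_self]; exact hVopen.mem_nhds hz
    exact hcu.continuousAt.preimage_mem_nhds h0
  -- regularity
  have hH3 : ContDiffOn ℝ ((2:ℕ) + 1) (Function.uncurry H) U := by exact_mod_cast hH
  have hH2 : ContDiffOn ℝ 2 (Function.uncurry H) U := hH.of_le (by norm_num)
  have hC2A : ContDiffOn ℝ ((1:ℕ) + 1) (Function.uncurry (dA H)) U := by
    exact_mod_cast contDiffOn_dA (m := 2) hUopen hH3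
  have hC2B : ContDiffOn ℝ ((1:ℕ) + 1) (Function.uncurry (dB H)) U := by
    exact_mod_cast contDiffOn_dB (m := 2) hUopen hH3
  have hC2A' : ContDiffOn ℝ 2 (Function.uncurry (dA H)) U := by exact_mod_cast hC2A
  have hC2B' : ContDiffOn ℝ 2 (Function.uncurry (dB H)) U := by exact_mod_cast hC2B
  have hC1AA : ContDiffOn ℝ (1:ℕ) (Function.uncurry (dA (dA H))) U :=
    contDiffOn_dA (m := 1) hUopen hC2A
  have hC1AB : ContDiffOn ℝ (1:ℕ) (Function.uncurry (dA (dB H))) U :=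
    contDiffOn_dA (m := 1) hUopen hC2B
  have hC1BB : ContDiffOn ℝ (1:ℕ) (Function.uncurry (dB (dB H))) U :=
    contDiffOn_dB (m := 1) hUopen hC2B
  have hC1A : ContDiffOn ℝ (1:ℕ) (Function.uncurry (dA H)) U := hC2A.of_le (by exact_mod_cast one_le_two)
  have hC1B : ContDiffOn ℝ (1:ℕ) (Function.uncurry (dB H)) U := hC2B.of_le (by exact_mod_cast one_le_two)
  have hC1H : ContDiffOn ℝ (1:ℕ) (Function.uncurry H) U := hH3.of_le (by exact_mod_cast Nat.le_add_left 1 2)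
  have hdiffs : ∀ g : ℝ → ℝ → ℝ, ContDiffOn ℝ (1:ℕ) (Function.uncurry g) U → ∀ z ∈ V,
      DifferentiableAt ℝ (Function.uncurry g) (Real.sqrt (z ⬝ᵥ A *ᵥ z), b ⬝ᵥ z) := by
    intro g hg z hz
    exact (hg.differentiableOn (by norm_num)).differentiableAt (hUopen.mem_nhds hz)
  -- step 1
  have step1 : ∀ i1 : Fin n, ∀ z ∈ V,
      pder i1 (fun z => (1 / 2) * H (Real.sqrt (z ⬝ᵥ A.mulVec z)) (b ⬝ᵥ z)) z
        = 1 / 2 * (dA H (Real.sqrt (z ⬝ᵥ A *ᵥ z)) (b ⬝ᵥ z) * ((A *ᵥ z) i1 / Real.sqrt (z ⬝ᵥ A *ᵥ z)) + dB H (Real.sqrt (z ⬝ᵥ A *ᵥ z)) (b ⬝ᵥ z) * b i1) := by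
    intro i1 z hz
    exact ((hasDerivAt_comp_g hAsymm b (hposV z hz) i1 (hdiffs H hC1H z hz)).const_mul
      ((1:ℝ) / 2)).deriv
  -- step 2
  have step2 : ∀ i1 j1 : Fin n, ∀ z ∈ V,
      pder j1 (pder i1 (fun z => (1 / 2) * H (Real.sqrt (z ⬝ᵥ A.mulVec z)) (b ⬝ᵥ z))) z
        = 1 / 2 * (dA (dA H) (Real.sqrt (z ⬝ᵥ A *ᵥ z)) (b ⬝ᵥ z) * (A *ᵥ z) i1 * (A *ᵥ z) j1 * (Real.sqrt (z ⬝ᵥ A *ᵥ z))⁻¹ * (Real.sqrt (z ⬝ᵥ A *ᵥ z))⁻¹ + dA (dB H) (Real.sqrt (z ⬝ᵥ A *ᵥ z)) (b ⬝ᵥ z) * b j1 * (A *ᵥ z) i1 * (Real.sqrt (z ⬝ᵥ A *ᵥ z))⁻¹ + dA H (Real.sqrt (z ⬝ᵥ A *ᵥ z)) (b ⬝ᵥ z) * A i1 j1 * (Real.sqrt (z ⬝ᵥ A *ᵥ z))⁻¹ - dA H (Real.sqrt (z ⬝ᵥ A *ᵥ z)) (b ⬝ᵥ z) * (A *ᵥ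 z) i1 * (A *ᵥ z) j1 * ((Real.sqrt (z ⬝ᵥ A *ᵥ z))⁻¹ * (Real.sqrt (z ⬝ᵥ A *ᵥ z))⁻¹ * (Real.sqrt (z ⬝ᵥ A *ᵥ z))⁻¹) + dA (dB H) (Real.sqrt (z ⬝ᵥ A *ᵥ z)) (b ⬝ᵥ z) * (A *ᵥ z) j1 * (Real.sqrt (z ⬝ᵥ A *ᵥ z))⁻¹ * b i1 + dB (dB H) (Real.sqrt (z ⬝ᵥ A *ᵥ z)) (b ⬝ᵥ z) * b j1 * b i1) := by
    intro i1 j1 z hz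
    have hpos := hposV z hz
    have hS0 : Real.sqrt (z ⬝ᵥ A *ᵥ z) ≠ 0 := (Real.sqrt_pos.2 hpos).ne'
    have heq : (fun t => pder i1
          (fun z => (1 / 2) * H (Real.sqrt (z ⬝ᵥ A.mulVec z)) (b ⬝ᵥ z))
          (Function.update z j1 t))
        =ᶠ[nhds (z j1)] (fun t => 1 / 2 * (dA H (Real.sqrt (Function.update z j1 t ⬝ᵥ A *ᵥ Function.update z j1 t)) (b ⬝ᵥ Function.update z j1 t) * ((A *ᵥ Function.update z j1 t) i1 / Real.sqrt (Function.update z j1 t ⬝ᵥ A *ᵥ Function.update z j1 t)) + dB H (Real.sqrt (Function.update z j1 t ⬝ᵥ A *ᵥ Function.update z j1 t)) (b ⬝ᵥ Function.update z j1 t) * b i1)) := by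
      filter_upwards [hupd_mem z hz j1] with t ht using step1 i1 _ ht
    have hne : Real.sqrt (Function.update z j1 (z j1) ⬝ᵥ A *ᵥ Function.update z j1 (z j1)) ≠ 0 := by
      rw [Function.update_eq_self]; exact hS0
    have hP := hasDerivAt_comp_g hAsymm b hpos j1 (hdiffs (dA H) hC1A z hz)
    have hQ := hasDerivAt_comp_g hAsymm b hpos j1 (hdiffs (dB H) hC1B z hz)
    have hYi := hasDerivAt_Y A z j1 i1
    have hal := hasDerivAt_al hAsymm hpos j1
    have hsum := ((hP.mul (hYi.div hal hne)).add (hQ.mul_const (b i1))).const_mul ((1:ℝ) / 2)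
    have hs : dB (dA H) (Real.sqrt (z ⬝ᵥ A *ᵥ z)) (b ⬝ᵥ z)
        = dA (dB H) (Real.sqrt (z ⬝ᵥ A *ᵥ z)) (b ⬝ᵥ z) := dBdA_eq_dAdB hUopen hH2 hz
    show deriv (fun t => pder i1
        (fun z => (1 / 2) * H (Real.sqrt (z ⬝ᵥ A.mulVec z)) (b ⬝ᵥ z))
        (Function.update z j1 t)) (z j1) = _
    rw [heq.deriv_eq]
    refine hsum.deriv.trans ?_
    simp only [Pi.mul_apply, Pi.div_apply, Pi.inv_apply, Function.update_eq_self]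
    rw [hs]
    set s : ℝ := Real.sqrt (z ⬝ᵥ A *ᵥ z) with hsdef
    have hsq : z ⬝ᵥ A *ᵥ z = s ^ 2 := (Real.sq_sqrt hpos.le).symm
    field_simp
    try simp only [hsq]
    ring
  -- step 3
  have hS0 : Real.sqrt (y ⬝ᵥ A *ᵥ y) ≠ 0 := (Real.sqrt_pos.2 (hposV y hyV)).ne'
  have hpos := hposV y hyV
  have heq : (fun t => pder j (pder i
        (fun z => (1 / 2) * H (Real.sqrt (z ⬝ᵥ A.mulVec z)) (b ⬝ᵥ z)))
        (Function.update y k t))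
      =ᶠ[nhds (y k)] (fun t => 1 / 2 * (dA (dA H) (Real.sqrt (Function.update y k t ⬝ᵥ A *ᵥ Function.update y k t)) (b ⬝ᵥ Function.update y k t) * (A *ᵥ Function.update y k t) i * (A *ᵥ Function.update y k t) j * (Real.sqrt (Function.update y k t ⬝ᵥ A *ᵥ Function.update y k t))⁻¹ * (Real.sqrt (Function.update y k t ⬝ᵥ A *ᵥ Function.update y k t))⁻¹ + dA (dB H) (Real.sqrt (Function.update y k t ⬝ᵥ A *ᵥ Function.update y k t)) (b ⬝ᵥ Function.update y k t) * b j * (A *ᵥ Function.update y k t) i * (Real.sqrt (Function.update y k t ⬝ᵥ A *ᵥ Function.update y k t))⁻¹ + dA H (Real.sqrt (Function.update y k t ⬝ᵥ A *ᵥ Function.update y k t)) (b ⬝ᵥ Function.update y k t) * A i j * (Real.sqrt (Function.update y k t ⬝ᵥ A *ᵥ Function.update y k t))⁻¹ - dA H (Real.sqrt (Function.update y k t ⬝ᵥ A *ᵥ Function.update y k t)) (b ⬝ᵥ Function.update y k t) * (A *ᵥ Function.update y k t) i * (A *ᵥ Function.update y k t) j * ((Real.sqrt (Function.update y k t ⬝ᵥ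 A *ᵥ Function.update y k t))⁻¹ * (Real.sqrt (Function.update y k t ⬝ᵥ A *ᵥ Function.update y k t))⁻¹ * (Real.sqrt (Function.update y k t ⬝ᵥ A *ᵥ Function.update y k t))⁻¹) + dA (dB H) (Real.sqrt (Function.update y k t ⬝ᵥ A *ᵥ Function.update y k t)) (b ⬝ᵥ Function.update y k t) * (A *ᵥ Function.update y k t) j * (Real.sqrt (Function.update y k t ⬝ᵥ A *ᵥ Function.update y k t))⁻¹ * b i + dB (dB H) (Real.sqrt (Function.update y k t ⬝ᵥ A *ᵥ Function.update y k t)) (b ⬝ᵥ Function.update y k t) * b j * b i)) := by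
    filter_upwards [hupd_mem y hyV k] with t ht using step2 i j _ ht
  have hne : Real.sqrt (Function.update y k (y k) ⬝ᵥ A *ᵥ Function.update y k (y k)) ≠ 0 := by
    rw [Function.update_eq_self]; exact hS0
  have h_dAA := hasDerivAt_comp_g hAsymm b hpos k (hdiffs (dA (dA H)) hC1AA y hyV)
  have h_dAB := hasDerivAt_comp_g hAsymm b hpos k (hdiffs (dA (dB H)) hC1AB y hyV)
  have h_dBB := hasDerivAt_comp_g hAsymm b hpos k (hdiffs (dB (dB H)) hC1BB y hyV)
  have h_dA := hasDerivAt_comp_g hAsymm b hpos k (hdiffs (dA H) hC1A y hyV)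
  have hYi := hasDerivAt_Y A y k i
  have hYj := hasDerivAt_Y A y k j
  have hu := (hasDerivAt_al hAsymm hpos k).inv hne
  have hT1 := (((h_dAA.mul hYi).mul hYj).mul hu).mul hu
  have hT2 := ((h_dAB.mul_const (b j)).mul hYi).mul hu
  have hT3 := (h_dA.mul_const (A i j)).mul hu
  have hT4 := ((h_dA.mul hYi).mul hYj).mul ((hu.mul hu).mul hu)
  have hT5 := ((h_dAB.mul hYj).mul hu).mul_const (b i)
  have hT6 := (h_dBB.mul_const (b j)).mul_const (b i)
  have hsum := (((((hT1.add hT2).add hT3).sub hT4).add hT5).add hT6).const_mul ((1:ℝ) / 2)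
  have hs1 : dB (dA H) (Real.sqrt (y ⬝ᵥ A *ᵥ y)) (b ⬝ᵥ y)
      = dA (dB H) (Real.sqrt (y ⬝ᵥ A *ᵥ y)) (b ⬝ᵥ y) := dBdA_eq_dAdB hUopen hH2 hmem
  have hs2 : dB (dA (dA H)) (Real.sqrt (y ⬝ᵥ A *ᵥ y)) (b ⬝ᵥ y)
      = dA (dA (dB H)) (Real.sqrt (y ⬝ᵥ A *ᵥ y)) (b ⬝ᵥ y) :=
    (dBdA_eq_dAdB hUopen hC2A' hmem).trans
      (dA_congr hUopen (fun q hq => dBdA_eq_dAdB hUopen hH2 hq) hmem)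
  have hs3 : dB (dA (dB H)) (Real.sqrt (y ⬝ᵥ A *ᵥ y)) (b ⬝ᵥ y)
      = dA (dB (dB H)) (Real.sqrt (y ⬝ᵥ A *ᵥ y)) (b ⬝ᵥ y) := dBdA_eq_dAdB hUopen hC2B' hmem
  have main : pder k (pder j (pder i
        (fun z => (1 / 2) * H (Real.sqrt (z ⬝ᵥ A.mulVec z)) (b ⬝ᵥ z)))) y
      = (1 / 2 * dB (dB (dB H)) (Real.sqrt (y ⬝ᵥ A *ᵥ y)) (b ⬝ᵥ y)) * b i * b j * b k
      + ((1 / (2 * Real.sqrt (y ⬝ᵥ A *ᵥ y)) * dA (dB H) (Real.sqrt (y ⬝ᵥ A *ᵥ y)) (b ⬝ᵥ y)) * A i j * b k + (1 / (2 * Real.sqrt (y ⬝ᵥ A *ᵥ y) ^ 2) * (dA (dA H) (Real.sqrt (y ⬝ᵥ A *ᵥ y)) (b ⬝ᵥ y) - (Real.sqrt (y ⬝ᵥ A *ᵥ y))⁻¹ * dA H (Real.sqrt (y ⬝ᵥ A *ᵥ y)) (b ⬝ᵥ y))) * A i j * (A *ᵥ y) k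
          + (1 / (2 * Real.sqrt (y ⬝ᵥ A *ᵥ y)) * dA (dB (dB H)) (Real.sqrt (y ⬝ᵥ A *ᵥ y)) (b ⬝ᵥ y)) * b i * b j * (A *ᵥ y) k + (1 / (2 * Real.sqrt (y ⬝ᵥ A *ᵥ y) ^ 2) * (dA (dA (dB H)) (Real.sqrt (y ⬝ᵥ A *ᵥ y)) (b ⬝ᵥ y) - (Real.sqrt (y ⬝ᵥ A *ᵥ y))⁻¹ * dA (dB H) (Real.sqrt (y ⬝ᵥ A *ᵥ y)) (b ⬝ᵥ y))) * b i * (A *ᵥ y) j * (A *ᵥ y) k)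
      + ((1 / (2 * Real.sqrt (y ⬝ᵥ A *ᵥ y)) * dA (dB H) (Real.sqrt (y ⬝ᵥ A *ᵥ y)) (b ⬝ᵥ y)) * A j k * b i + (1 / (2 * Real.sqrt (y ⬝ᵥ A *ᵥ y) ^ 2) * (dA (dA H) (Real.sqrt (y ⬝ᵥ A *ᵥ y)) (b ⬝ᵥ y) - (Real.sqrt (y ⬝ᵥ A *ᵥ y))⁻¹ * dA H (Real.sqrt (y ⬝ᵥ A *ᵥ y)) (b ⬝ᵥ y))) * A j k * (A *ᵥ y) i
          + (1 / (2 * Real.sqrt (y ⬝ᵥ A *ᵥ y)) * dA (dB (dB H)) (Real.sqrt (y ⬝ᵥ A *ᵥ y)) (b ⬝ᵥ y)) * b j * b k * (A *ᵥ y) i + (1 / (2 * Real.sqrt (y ⬝ᵥ A *ᵥ y) ^ 2) * (dA (dA (dB H)) (Real.sqrt (y ⬝ᵥ A *ᵥ y)) (b ⬝ᵥ y) - (Real.sqrt (y ⬝ᵥ A *ᵥ y))⁻¹ * dA (dB H) (Real.sqrt (y ⬝ᵥ A *ᵥ y)) (b ⬝ᵥ y))) * b j * (A *ᵥ y) k *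 (A *ᵥ y) i)
      + ((1 / (2 * Real.sqrt (y ⬝ᵥ A *ᵥ y)) * dA (dB H) (Real.sqrt (y ⬝ᵥ A *ᵥ y)) (b ⬝ᵥ y)) * A k i * b j + (1 / (2 * Real.sqrt (y ⬝ᵥ A *ᵥ y) ^ 2) * (dA (dA H) (Real.sqrt (y ⬝ᵥ A *ᵥ y)) (b ⬝ᵥ y) - (Real.sqrt (y ⬝ᵥ A *ᵥ y))⁻¹ * dA H (Real.sqrt (y ⬝ᵥ A *ᵥ y)) (b ⬝ᵥ y))) * A k i * (A *ᵥ y) j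
          + (1 / (2 * Real.sqrt (y ⬝ᵥ A *ᵥ y)) * dA (dB (dB H)) (Real.sqrt (y ⬝ᵥ A *ᵥ y)) (b ⬝ᵥ y)) * b k * b i * (A *ᵥ y) j + (1 / (2 * Real.sqrt (y ⬝ᵥ A *ᵥ y) ^ 2) * (dA (dA (dB H)) (Real.sqrt (y ⬝ᵥ A *ᵥ y)) (b ⬝ᵥ y) - (Real.sqrt (y ⬝ᵥ A *ᵥ y))⁻¹ * dA (dB H) (Real.sqrt (y ⬝ᵥ A *ᵥ y)) (b ⬝ᵥ y))) * b k * (A *ᵥ y) i * (A *ᵥ y) j)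
      + (1 / (2 * Real.sqrt (y ⬝ᵥ A *ᵥ y) ^ 3) * (dA (dA (dA H)) (Real.sqrt (y ⬝ᵥ A *ᵥ y)) (b ⬝ᵥ y) - 3 * (Real.sqrt (y ⬝ᵥ A *ᵥ y))⁻¹ * dA (dA H) (Real.sqrt (y ⬝ᵥ A *ᵥ y)) (b ⬝ᵥ y) + 3 * (Real.sqrt (y ⬝ᵥ A *ᵥ y))⁻¹ ^ 2 * dA H (Real.sqrt (y ⬝ᵥ A *ᵥ y)) (b ⬝ᵥ y))) * (A *ᵥ y) i * (A *ᵥ y) j * (A *ᵥ y) k := by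
    show deriv (fun t => pder j (pder i
        (fun z => (1 / 2) * H (Real.sqrt (z ⬝ᵥ A.mulVec z)) (b ⬝ᵥ z)))
        (Function.update y k t)) (y k) = _
    rw [heq.deriv_eq]
    refine hsum.deriv.trans ?_
    simp only [Pi.mul_apply, Pi.div_apply, Pi.inv_apply, Function.update_eq_self]
    rw [hs1, hs2, hs3, hAsymm.apply k i]
    set s : ℝ := Real.sqrt (y ⬝ᵥ A *ᵥ y) with hsdef
    have hsq : y ⬝ᵥ A *ᵥ y = s ^ 2 := (Real.sq_sqrt hpos.le).symm
    field_simp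
    try simp only [hsq]
    ring
  intro al be Y rhom1 rhom2 rm1 rm2 rm3 rm4
  exact ⟨main, congrArg (fun x => -(1 / 2) * x) main⟩
end
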